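/- Let K be a subfield of ℝ, n ≥ 1, and r ∈ ℝ with r ∉ K and r² ∈ K. Call a vector in ℝ^{n+1} K-rational if all its coordinates lie in K, and say an ℝ-subspace of ℝ^{n+1} is defined over K if it is spanned over ℝ by its K-rational vectors. Let Φ : ℝ^{n+1} → ℝ^{n+1} be the ℝ-linear map (y₀, y₁, …, yₙ) ↦ (r y₀, y₁, …, yₙ), let e₀ = (1, 0, …, 0), let U ⊆ ℝ^{n+1} be a set of K-rational vectors whose first coordinate is 0, and let ξ ∈ ℝ^{n+1} be a K-rational vector with ξ₀ ≠ 0. Then the image Φ(span_ℝ(U ∪ {ξ})) is defined over K if and only if ξ − ξ₀ e₀ ∈ span_ℝ(U); and in that case Φ(span_ℝ(U ∪ {ξ})) = span_ℝ(U ∪ {e₀}). -/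
import Mathlib


/-- The linear map `Φ : ℝ^{n+1} → ℝ^{n+1}`, `(y₀, y₁, …, yₙ) ↦ (r y₀, y₁, …, yₙ)`. -/
noncomputable def stretchFirst (n : ℕ) (r : ℝ) :
    (Fin (n + 1) → ℝ) →ₗ[ℝ] (Fin (n + 1) → ℝ) :=
  LinearMap.pi fun i =>
    if i = 0 then r • (LinearMap.proj i : (Fin (n + 1) → ℝ) →ₗ[ℝ] ℝ)
    else (LinearMap.proj i : (Fin (n + 1) → ℝ) →ₗ[ℝ] ℝ)

/-- A real subspace of `ℝ^{n+1}` is defined over the subfield `K ⊆ ℝ` when it is spanned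
over `ℝ` by its vectors with all coordinates in `K`. -/
def DefinedOver (K : Subfield ℝ) {n : ℕ} (W : Submodule ℝ (Fin (n + 1) → ℝ)) : Prop :=
  W = Submodule.span ℝ {x : Fin (n + 1) → ℝ | x ∈ W ∧ ∀ i, x i ∈ K}

set_option maxHeartbeats 2000000 in
set_option synthInstance.maxHeartbeats 1000000 in
/-- Auxiliary: a `K`-rational vector outside the real span of a set of `K`-rational
vectors is separated from it by a linear functional with coefficients in `K`. -/
theorem rational_separating (K : Subfield ℝ) (m : ℕ) (T : Set (Fin m → ℝ))
    (hT : ∀ t ∈ T, ∀ i, t i ∈ K) (x : Fin m → ℝ) (hxK : ∀ i, x i ∈ K)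
    (hx : x ∉ Submodule.span ℝ T) :
    ∃ φ : (Fin m → ℝ) →ₗ[ℝ] ℝ, (∀ (y : Fin m → ℝ), (∀ i, y i ∈ K) → φ y ∈ K) ∧
      φ x ≠ 0 ∧ (∀ t ∈ T, φ t = 0) := by
  classical
  set x' : Fin m → K := fun i => ⟨x i, hxK i⟩ with hx'def
  set T' : Set (Fin m → K) := {y | (fun i => (y i : ℝ)) ∈ T} with hT'def
  have key : ∀ y : Fin m → K, y ∈ Submodule.span K T' →
      (fun i => (y i : ℝ)) ∈ Submodule.span ℝ T := by
    intro y hy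
    refine Submodule.span_induction (fun z hz => Submodule.subset_span hz)
      ?_ ?_ ?_ hy
    · have h : (fun i => (((0 : Fin m → K)) i : ℝ)) = (0 : Fin m → ℝ) := by
        funext i; simp
      rw [h]; exact (Submodule.span ℝ T).zero_mem
    · intro a b _ _ ha hb
      have h : (fun i => ((a + b) i : ℝ)) = (fun i => (a i : ℝ)) + fun i => (b i : ℝ) := by
        funext i; push_cast; rfl
      rw [h]; exact Submodule.add_mem _ ha hb
    · intro c y _ hy
      have h : (fun i => ((c • y) i : ℝ)) = (c : ℝ) • fun i => (y i : ℝ) := by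
        funext i; push_cast; rfl
      rw [h]; exact Submodule.smul_mem _ _ hy
  have hx' : x' ∉ Submodule.span K T' := fun h => hx (key x' h)
  obtain ⟨φ₀, hφ₀x, hφ₀T⟩ :=
    (Submodule.span K T').exists_dual_map_eq_bot_of_notMem hx' inferInstance
  have hker : ∀ y ∈ Submodule.span K T', φ₀ y = 0 := by
    intro y hy
    have h1 : φ₀ y ∈ Submodule.map φ₀ (Submodule.span K T') :=
      Submodule.mem_map_of_mem hy
    rw [hφ₀T] at h1
    simpa using h1
  set φ : (Fin m → ℝ) →ₗ[ℝ] ℝ := ∑ i, ((φ₀ (Pi.single i 1) : ℝ)) • LinearMap.proj i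
    with hφdef
  have hφ_eq : ∀ (y : Fin m → ℝ) (hy : ∀ i, y i ∈ K),
      φ y = (φ₀ (fun i => ⟨y i, hy i⟩) : ℝ) := by
    intro y hy
    have h1 := LinearMap.pi_apply_eq_sum_univ φ₀ (fun i => (⟨y i, hy i⟩ : K))
    have h2 : ∀ i : Fin m, (fun j => if i = j then (1 : K) else 0) = Pi.single i 1 := by
      intro i; funext j; simp [Pi.single_apply, eq_comm]
    simp only [h2] at h1
    rw [h1]
    push_cast
    simp only [hφdef, LinearMap.sum_apply, LinearMap.smul_apply, LinearMap.proj_apply,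
      smul_eq_mul]
    exact Finset.sum_congr rfl fun i _ => mul_comm _ _
  refine ⟨φ, ?_, ?_, ?_⟩
  · intro y hy; rw [hφ_eq y hy]; exact (φ₀ _).2
  · rw [hφ_eq x hxK]
    intro h
    exact hφ₀x (by exact_mod_cast h)
  · intro t ht
    have htK : ∀ i, t i ∈ K := hT t ht
    rw [hφ_eq t htK]
    have hmem : (fun i => (⟨t i, htK i⟩ : K)) ∈ T' := by
      show (fun i => ((⟨t i, htK i⟩ : K) : ℝ)) ∈ T
      simpa using ht
    rw [hker _ (Submodule.subset_span hmem)]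
    simp


/-- Let `r ∈ ℝ` with `r ∉ K`, `r² ∈ K`, let `U` be a set of `K`-rational vectors with
vanishing first coordinate, and `ξ` a `K`-rational vector with `ξ₀ ≠ 0`.  Then
`Φ(span_ℝ(U ∪ {ξ}))` is defined over `K` iff `ξ − ξ₀ e₀ ∈ span_ℝ U`, and in that case
`Φ(span_ℝ(U ∪ {ξ})) = span_ℝ(U ∪ {e₀})`. -/
theorem image_defined_over_iff (K : Subfield ℝ) (n : ℕ) (hn : 1 ≤ n)
    (r : ℝ) (hrK : r ∉ K) (hr2 : r ^ 2 ∈ K)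
    (U : Set (Fin (n + 1) → ℝ)) (hU : ∀ u ∈ U, (∀ i, u i ∈ K) ∧ u 0 = 0)
    (ξ : Fin (n + 1) → ℝ) (hξ : ∀ i, ξ i ∈ K) (hξ0 : ξ 0 ≠ 0)
    (e₀ : Fin (n + 1) → ℝ) (he₀ : e₀ = Pi.single 0 1) :
    (DefinedOver K (Submodule.map (stretchFirst n r) (Submodule.span ℝ (insert ξ U))) ↔
        ξ - ξ 0 • e₀ ∈ Submodule.span ℝ U) ∧
    (ξ - ξ 0 • e₀ ∈ Submodule.span ℝ U →
      Submodule.map (stretchFirst n r) (Submodule.span ℝ (insert ξ U)) =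
        Submodule.span ℝ (insert e₀ U)) := by
  classical
  have hr0 : r ≠ 0 := fun h => hrK (h ▸ K.zero_mem)
  have hrξ : r * ξ 0 ≠ 0 := mul_ne_zero hr0 hξ0
  have hΦ : ∀ (x : Fin (n + 1) → ℝ) (i : Fin (n + 1)),
      stretchFirst n r x i = if i = 0 then r * x 0 else x i := by
    intro x i
    by_cases hi : i = 0 <;> simp [stretchFirst, hi]
  have hΦU : ∀ u ∈ U, stretchFirst n r u = u := by
    intro u hu
    funext i
    rw [hΦ]
    by_cases hi : i = 0
    · simp [hi, (hU u hu).2]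
    · simp [hi]
  set w : Fin (n + 1) → ℝ := ξ - ξ 0 • e₀ with hwdef
  have hwi : ∀ i, w i = if i = 0 then 0 else ξ i := by
    intro i
    by_cases hi : i = 0 <;> simp [hwdef, he₀, hi, Pi.single_apply]
  have hw0 : w 0 = 0 := by rw [hwi]; simp
  have hwrat : ∀ i, w i ∈ K := by
    intro i
    rw [hwi]
    split
    · exact K.zero_mem
    · exact hξ i
  have he₀rat : ∀ i, e₀ i ∈ K := by
    intro i
    rw [he₀, Pi.single_apply]
    split
    · exact K.one_mem
    · exact K.zero_mem
  have hΦξ : stretchFirst n r ξ = (r * ξ 0) • e₀ + w := by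
    funext i
    rw [hΦ]
    by_cases hi : i = 0 <;> simp [hi, hwi, he₀, Pi.single_apply, Pi.add_apply]
  -- Step A: the image is the span of `insert (Φ ξ) U`.
  have himg : stretchFirst n r '' U = U := by
    rw [Set.image_congr hΦU, Set.image_id']
  have hmap : Submodule.map (stretchFirst n r) (Submodule.span ℝ (insert ξ U)) =
      Submodule.span ℝ (insert (stretchFirst n r ξ) U) := by
    rw [Submodule.map_span, Set.image_insert_eq, himg]
  set V := Submodule.span ℝ U with hVdef
  set W := Submodule.span ℝ (insert (stretchFirst n r ξ) U) with hWdef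
  have hV0 : ∀ z ∈ V, z 0 = 0 := by
    intro z hz
    refine Submodule.span_induction (fun u hu => (hU u hu).2) rfl ?_ ?_ hz
    · intro a b _ _ ha hb
      simp [Pi.add_apply, ha, hb]
    · intro c y _ hy
      simp [Pi.smul_apply, hy]
  -- second part: if w ∈ V then W is the span of insert e₀ U
  have hback : w ∈ V → W = Submodule.span ℝ (insert e₀ U) := by
    intro hwV
    apply le_antisymm
    · rw [hWdef, Submodule.span_le]
      rintro x (rfl | hx)
      · rw [hΦξ]
        exact Submodule.add_mem _
          (Submodule.smul_mem _ _ (Submodule.subset_span (Set.mem_insert _ _)))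
          (Submodule.span_mono (Set.subset_insert _ _) hwV)
      · exact Submodule.subset_span (Set.mem_insert_of_mem _ hx)
    · rw [Submodule.span_le]
      intro x hx
      rcases Set.mem_insert_iff.1 hx with h | h
      · have he : e₀ = (r * ξ 0)⁻¹ • (stretchFirst n r ξ - w) := by
          rw [hΦξ, add_sub_cancel_right, smul_smul, inv_mul_cancel₀ hrξ, one_smul]
        rw [h, he]
        exact Submodule.smul_mem _ _ (Submodule.sub_mem _
          (Submodule.subset_span (Set.mem_insert _ _))
          (Submodule.span_mono (Set.subset_insert _ _) hwV))
      · exact Submodule.subset_span (Set.mem_insert_of_mem _ h)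
  have hdef : w ∈ V → DefinedOver K W := by
    intro hwV
    have hWe := hback hwV
    apply le_antisymm
    · conv_lhs => rw [hWe]
      rw [Submodule.span_le]
      intro x hx
      rcases Set.mem_insert_iff.1 hx with h | h
      · subst h
        exact Submodule.subset_span
          ⟨hWe ▸ Submodule.subset_span (Set.mem_insert _ _), he₀rat⟩
      · exact Submodule.subset_span
          ⟨Submodule.subset_span (Set.mem_insert_of_mem _ h), (hU x h).1⟩
    · rw [Submodule.span_le]
      exact fun x hx => hx.1
  -- forward direction
  have hforward : DefinedOver K W → w ∈ V := by
    intro hW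
    by_contra hwV
    have hwE : w ∉ Submodule.span ℝ (insert e₀ U) := by
      intro h
      rw [Submodule.mem_span_insert] at h
      obtain ⟨a, z, hz, hzw⟩ := h
      have h0 := congrFun hzw 0
      rw [hw0, Pi.add_apply, Pi.smul_apply, he₀] at h0
      simp [hV0 z hz] at h0
      apply hwV
      rw [hzw, ← h0]
      simpa using hz
    have hTrat : ∀ t ∈ insert e₀ U, ∀ i, t i ∈ K := by
      rintro t (rfl | ht)
      · exact he₀rat
      · exact (hU t ht).1
    obtain ⟨φ, hφK, hφw, hφT⟩ :=
      rational_separating K (n + 1) (insert e₀ U) hTrat w hwrat hwE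
    have hφV : ∀ z ∈ V, φ z = 0 := by
      intro z hz
      refine Submodule.span_induction
        (fun u hu => hφT u (Set.mem_insert_of_mem _ hu)) (map_zero φ) ?_ ?_ hz
      · intro a b _ _ ha hb
        rw [map_add, ha, hb, add_zero]
      · intro c y _ hy
        rw [map_smul, hy, smul_zero]
    have hφe₀ : φ e₀ = 0 := hφT e₀ (Set.mem_insert _ _)
    set d := φ w with hddef
    have hdK : d ∈ K := hφK w hwrat
    have hφΦξ : φ (stretchFirst n r ξ) = d := by
      rw [hΦξ, map_add, map_smul, hφe₀, smul_zero, zero_add]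
    have hS : ∀ s, s ∈ W → (∀ i, s i ∈ K) → φ s = 0 := by
      intro s hsW hsK
      rw [hWdef, Submodule.mem_span_insert] at hsW
      obtain ⟨t, z, hz, rfl⟩ := hsW
      have hs0 : (t • stretchFirst n r ξ + z) 0 = t * (r * ξ 0) := by
        rw [Pi.add_apply, Pi.smul_apply, hΦ, hV0 z hz]
        simp
      have hφs : φ (t • stretchFirst n r ξ + z) = t * d := by
        rw [map_add, map_smul, hφΦξ, hφV z hz, add_zero, smul_eq_mul]
      by_cases ht : t = 0
      · rw [hφs, ht, zero_mul]
      · exfalso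
        have h1 : t * d ∈ K := hφs ▸ hφK _ hsK
        have htK : t ∈ K := by
          have h2 : t = t * d * d⁻¹ := by field_simp
          rw [h2]
          exact K.mul_mem h1 (K.inv_mem hdK)
        apply hrK
        have h3 : t * (r * ξ 0) ∈ K := hs0 ▸ hsK 0
        have h4 : r = t * (r * ξ 0) * t⁻¹ * (ξ 0)⁻¹ := by
          field_simp
        rw [h4]
        exact K.mul_mem (K.mul_mem h3 (K.inv_mem htK)) (K.inv_mem (hξ 0))
    have hmem : stretchFirst n r ξ ∈ W := Submodule.subset_span (Set.mem_insert _ _)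
    have hd0 : d ≠ 0 := hφw
    apply hd0
    rw [← hφΦξ]
    have hW' : W = Submodule.span ℝ {x | x ∈ W ∧ ∀ i, x i ∈ K} := hW
    rw [hW'] at hmem
    refine Submodule.span_induction (fun s hs => hS s hs.1 hs.2) (map_zero φ) ?_ ?_ hmem
    · intro a b _ _ ha hb
      rw [map_add, ha, hb, add_zero]
    · intro c y _ hy
      rw [map_smul, hy, smul_zero]
  rw [hmap]
  refine ⟨⟨hforward, hdef⟩, hback⟩
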